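/- Let μ ∈ (0,1) and define [f]_{^μ} = sup_{0<s<u≤1} Δ(f;s,(s+u)/2,u)/(u-s)^μ (midpoint Hölder seminorm) and [f]_{~μ} = sup_{η>0} N(f;η)/η^μ. Then for any f ∈ D^μ([0,1],E), [f]_{^μ} ≤ [f]_μ ≤ 2[f]_{~μ} ≤ (2/(1−2^{−μ}))·[f]_{^μ}. In particular the midpoint seminorm [f]_{^μ} is equivalent to the full seminorm [f]_μ = sup_{0≤s≤t≤u≤1} Δ(f;s,t,u)/(u−s)^μ. -/

import Mathlib

open MeasureTheory Set Filter

noncomputable section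

/-- `f` is càdlàg on `[0,1]`: right-continuous on `[0,1)` and with left limits on `(0,1]`. -/
def IsCadlagOn {E : Type*} [MetricSpace E] (f : ℝ → E) : Prop :=
  (∀ t ∈ Set.Ico (0:ℝ) 1, ContinuousWithinAt f (Set.Ici t) t) ∧
  (∀ t ∈ Set.Ioc (0:ℝ) 1, ∃ l : E, Filter.Tendsto f (nhdsWithin t (Set.Iio t)) (nhds l))

/-- `Δ(f;s,t,u) = d(f(s),f(t)) ∧ d(f(t),f(u))`. -/
def tripleDelta {E : Type*} [MetricSpace E] (f : ℝ → E) (s t u : ℝ) : ℝ :=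
  min (dist (f s) (f t)) (dist (f t) (f u))

/-- Standard modulus of càdlàguity `Δ(f;(σ,τ))`. -/
def deltaMod {E : Type*} [MetricSpace E] (f : ℝ → E) (σ τ : ℝ) : ℝ :=
  sSup {x : ℝ | ∃ s t u : ℝ, σ ≤ s ∧ s ≤ t ∧ t ≤ u ∧ u ≤ τ ∧ x = tripleDelta f s t u}

/-- Fernique's modulus `N(f;(σ,τ))`. -/
def fernMod {E : Type*} [MetricSpace E] (f : ℝ → E) (σ τ : ℝ) : ℝ :=
  sInf {x : ℝ | ∃ θ : ℝ, σ < θ ∧ θ ≤ τ ∧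
    x = sSup {y : ℝ | ∃ s u : ℝ, σ ≤ s ∧ s < θ ∧ θ ≤ u ∧ u ≤ τ ∧
      y = max (dist (f σ) (f s)) (dist (f u) (f τ))}}

/-- `N(f;η) = sup_{0 < τ - σ ≤ η} N(f;(σ,τ))` (with `0 ≤ σ < τ ≤ 1`). -/
def fernEta {E : Type*} [MetricSpace E] (f : ℝ → E) (η : ℝ) : ℝ :=
  sSup {x : ℝ | ∃ σ τ : ℝ, 0 ≤ σ ∧ σ < τ ∧ τ ≤ 1 ∧ τ - σ ≤ η ∧ x = fernMod f σ τ}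

/-- The set of quotients defining `[f]_μ`. -/
def holderSet {E : Type*} [MetricSpace E] (μ : ℝ) (f : ℝ → E) : Set ℝ :=
  {x : ℝ | ∃ s t u : ℝ, 0 ≤ s ∧ s ≤ t ∧ t ≤ u ∧ u ≤ 1 ∧
    x = tripleDelta f s t u / (u - s) ^ μ}

/-- `[f]_μ`. -/
def holderSemi {E : Type*} [MetricSpace E] (μ : ℝ) (f : ℝ → E) : ℝ :=
  sSup (holderSet μ f)

/-- The set of quotients defining `|f]_μ`. -/
def leftSet {E : Type*} [MetricSpace E] (μ : ℝ) (f : ℝ → E) : Set ℝ :=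
  {x : ℝ | ∃ t : ℝ, 0 < t ∧ t ≤ 1 ∧ x = dist (f 0) (f t) / t ^ μ}

/-- `|f]_μ = sup_{t ∈ (0,1]} d(f(0),f(t))/t^μ`. -/
def leftSemi {E : Type*} [MetricSpace E] (μ : ℝ) (f : ℝ → E) : ℝ :=
  sSup (leftSet μ f)

/-- The set of quotients defining `[f|_μ`. -/
def rightSet {E : Type*} [MetricSpace E] (μ : ℝ) (f : ℝ → E) : Set ℝ :=
  {x : ℝ | ∃ t : ℝ, 0 ≤ t ∧ t < 1 ∧ x = dist (f 1) (f t) / (1 - t) ^ μ}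

/-- `[f|_μ = sup_{t ∈ [0,1)} d(f(1),f(t))/(1-t)^μ`. -/
def rightSemi {E : Type*} [MetricSpace E] (μ : ℝ) (f : ℝ → E) : ℝ :=
  sSup (rightSet μ f)

/-- `[f]_{~μ} = sup_{η > 0} N(f;η)/η^μ`. -/
def tildeSemi {E : Type*} [MetricSpace E] (μ : ℝ) (f : ℝ → E) : ℝ :=
  sSup {x : ℝ | ∃ η : ℝ, 0 < η ∧ x = fernEta f η / η ^ μ}

/-- `[f]_{^μ} = sup_{0 < s < u ≤ 1} Δ(f;s,(s+u)/2,u)/(u-s)^μ`. -/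
def midSemi {E : Type*} [MetricSpace E] (μ : ℝ) (f : ℝ → E) : ℝ :=
  sSup {x : ℝ | ∃ s u : ℝ, 0 < s ∧ s < u ∧ u ≤ 1 ∧
    x = tripleDelta f s ((s + u) / 2) u / (u - s) ^ μ}

/-- Membership in `D^μ([0,1],E)`: càdlàg with finite Hölder-type seminorms. -/
def MemDHolder {E : Type*} [MetricSpace E] (μ : ℝ) (f : ℝ → E) : Prop :=
  IsCadlagOn f ∧ BddAbove (holderSet μ f) ∧ BddAbove (leftSet μ f) ∧
    BddAbove (rightSet μ f)

/-- `[[f]]_{μ,p}^p`, the triple-integral quantity. -/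
def tripleIntP {E : Type*} [MetricSpace E] (μ p : ℝ) (f : ℝ → E) : ℝ :=
  ∫ q in {q : ℝ × ℝ × ℝ | 0 ≤ q.1 ∧ q.1 < q.2.1 ∧ q.2.1 < q.2.2 ∧ q.2.2 ≤ 1},
    tripleDelta f q.1 q.2.1 q.2.2 ^ p / (q.2.2 - q.1) ^ (μ * p + 3)

/-- `[[f]]_{μ,p}`. -/
def tripleSemi {E : Type*} [MetricSpace E] (μ p : ℝ) (f : ℝ → E) : ℝ :=
  tripleIntP μ p f ^ (1 / p)

/-- `||f]]_{μ,p}^p`. -/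
def leftIntP {E : Type*} [MetricSpace E] (μ p : ℝ) (f : ℝ → E) : ℝ :=
  ∫ t in (0:ℝ)..1, dist (f 0) (f t) ^ p / t ^ (μ * p + 1)

/-- `||f]]_{μ,p}`. -/
def leftIntSemi {E : Type*} [MetricSpace E] (μ p : ℝ) (f : ℝ → E) : ℝ :=
  leftIntP μ p f ^ (1 / p)

/-- `[[f||_{μ,p}^p`. -/
def rightIntP {E : Type*} [MetricSpace E] (μ p : ℝ) (f : ℝ → E) : ℝ :=
  ∫ t in (0:ℝ)..1, dist (f 1) (f t) ^ p / (1 - t) ^ (μ * p + 1)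

/-- `[[f||_{μ,p}`. -/
def rightIntSemi {E : Type*} [MetricSpace E] (μ p : ℝ) (f : ℝ → E) : ℝ :=
  rightIntP μ p f ^ (1 / p)

/-- The sup over `[0,1]` of the norm of an `ℝ^d`-valued function. -/
def supNorm {k : ℕ} (f : ℝ → EuclideanSpace ℝ (Fin k)) : ℝ :=
  sSup {x : ℝ | ∃ t : ℝ, 0 ≤ t ∧ t ≤ 1 ∧ x = ‖f t‖}

/-- Dyadic projection `π_n`. -/
def dyadicProj (n : ℕ) (t : ℝ) : ℝ :=
  if t = 1 then 1 - 1 / 2 ^ n else (⌊t * 2 ^ n⌋ : ℝ) / 2 ^ n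


section Stmt4Aux

variable {E : Type*} [MetricSpace E]

private def geomC (r : ℝ) (n : ℕ) : ℝ := ∑ i ∈ Finset.range n, r ^ i

private lemma geomC_nonneg {r : ℝ} (hr : 0 ≤ r) (n : ℕ) : 0 ≤ geomC r n :=
  Finset.sum_nonneg fun i _ => pow_nonneg hr i

private lemma geomC_succ (r : ℝ) (n : ℕ) : geomC r (n + 1) = 1 + r * geomC r n := by
  unfold geomC
  rw [Finset.sum_range_succ']
  simp only [pow_succ, pow_zero, ← Finset.sum_mul]
  ring

private lemma geomC_le {r : ℝ} (h0 : 0 ≤ r) (h1 : r < 1) (n : ℕ) :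
    geomC r n ≤ 1 / (1 - r) := by
  have h1r : (0:ℝ) < 1 - r := by linarith
  induction n with
  | zero =>
    have h2 : geomC r 0 = 0 := by simp [geomC]
    rw [h2]
    exact (div_pos one_pos h1r).le
  | succ n ih =>
    rw [geomC_succ]
    have h2 : r * geomC r n ≤ r * (1 / (1 - r)) := mul_le_mul_of_nonneg_left ih h0
    have h3 : 1 + r * (1 / (1 - r)) = 1 / (1 - r) := by field_simp; ring
    linarith

private def midSet (μ : ℝ) (f : ℝ → E) : Set ℝ :=
  {x : ℝ | ∃ s u : ℝ, 0 < s ∧ s < u ∧ u ≤ 1 ∧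
    x = tripleDelta f s ((s + u) / 2) u / (u - s) ^ μ}

private lemma midSemi_eq (μ : ℝ) (f : ℝ → E) : midSemi μ f = sSup (midSet μ f) := rfl

private def tildeSet (μ : ℝ) (f : ℝ → E) : Set ℝ :=
  {x : ℝ | ∃ η : ℝ, 0 < η ∧ x = fernEta f η / η ^ μ}

private lemma tildeSemi_eq (μ : ℝ) (f : ℝ → E) : tildeSemi μ f = sSup (tildeSet μ f) := rfl

private def innerSet (f : ℝ → E) (σ τ θ : ℝ) : Set ℝ :=
  {y : ℝ | ∃ s u : ℝ, σ ≤ s ∧ s < θ ∧ θ ≤ u ∧ u ≤ τ ∧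
    y = max (dist (f σ) (f s)) (dist (f u) (f τ))}

private lemma fernMod_eq (f : ℝ → E) (σ τ : ℝ) :
    fernMod f σ τ = sInf {x : ℝ | ∃ θ : ℝ, σ < θ ∧ θ ≤ τ ∧ x = sSup (innerSet f σ τ θ)} := rfl

private def fernSet (f : ℝ → E) (η : ℝ) : Set ℝ :=
  {x : ℝ | ∃ σ τ : ℝ, 0 ≤ σ ∧ σ < τ ∧ τ ≤ 1 ∧ τ - σ ≤ η ∧ x = fernMod f σ τ}

private lemma fernEta_eq (f : ℝ → E) (η : ℝ) : fernEta f η = sSup (fernSet f η) := rfl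

/-- The dyadic chaining estimate. -/
private lemma dyadic_bound {μ M : ℝ} {f : ℝ → E} (hM0 : 0 ≤ M)
    (hfm : ∀ s u : ℝ, 0 ≤ s → s < u → u ≤ 1 →
      min (dist (f s) (f ((s + u) / 2))) (dist (f ((s + u) / 2)) (f u)) ≤ M * (u - s) ^ μ) :
    ∀ (n : ℕ) (α β : ℝ), 0 ≤ α → α < β → β ≤ 1 → ∀ j k : ℕ, j ≤ k → k ≤ 2 ^ n →
      min (dist (f α) (f (α + (j : ℝ) * (β - α) / 2 ^ n)))
          (dist (f (α + (k : ℝ) * (β - α) / 2 ^ n)) (f β))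
        ≤ M * (β - α) ^ μ * geomC (2 ^ (-μ)) n := by
  intro n
  induction n with
  | zero =>
    intro α β hα hαβ hβ j k hjk hk
    have hk1 : k ≤ 1 := by simpa using hk
    rw [show geomC ((2:ℝ) ^ (-μ)) 0 = 0 from by simp [geomC], mul_zero]
    rcases Nat.eq_zero_or_pos j with hj0 | hj1
    · subst hj0
      apply min_le_of_left_le
      simp
    · have hj1' : j = 1 := le_antisymm (hjk.trans hk1) hj1
      subst hj1'
      have hk1' : k = 1 := le_antisymm hk1 hjk
      subst hk1'
      apply min_le_of_right_le
      have e : α + ((1:ℕ) : ℝ) * (β - α) / 2 ^ 0 = β := by push_cast; ring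
      rw [e, dist_self]
  | succ n IH =>
    intro α β hα hαβ hβ j k hjk hk
    have hαβ' : 0 < β - α := sub_pos.mpr hαβ
    have hr0 : (0:ℝ) < 2 ^ (-μ) := Real.rpow_pos_of_pos (by norm_num) _
    have hG0 : 0 ≤ geomC ((2:ℝ) ^ (-μ)) n := geomC_nonneg hr0.le n
    have hm1 : α < (α + β) / 2 := by linarith
    have hm2 : (α + β) / 2 < β := by linarith
    have hm0 : 0 ≤ (α + β) / 2 := by linarith
    have hm3 : (α + β) / 2 ≤ 1 := by linarith
    have hD0 : 0 ≤ M * (β - α) ^ μ := mul_nonneg hM0 (Real.rpow_nonneg hαβ'.le μ)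
    have hhalf : ((β - α) / 2) ^ μ = (β - α) ^ μ * 2 ^ (-μ) := by
      rw [Real.div_rpow hαβ'.le (by norm_num : (0:ℝ) ≤ 2),
        Real.rpow_neg (by norm_num : (0:ℝ) ≤ 2), div_eq_mul_inv]
    have hSc1 : M * ((α + β) / 2 - α) ^ μ * geomC (2 ^ (-μ)) n
        = M * (β - α) ^ μ * (2 ^ (-μ) * geomC (2 ^ (-μ)) n) := by
      rw [show (α + β) / 2 - α = (β - α) / 2 by ring, hhalf]; ring
    have hSc2 : M * (β - (α + β) / 2) ^ μ * geomC (2 ^ (-μ)) n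
        = M * (β - α) ^ μ * (2 ^ (-μ) * geomC (2 ^ (-μ)) n) := by
      rw [show β - (α + β) / 2 = (β - α) / 2 by ring, hhalf]; ring
    have hS0 : 0 ≤ M * (β - α) ^ μ * (2 ^ (-μ) * geomC (2 ^ (-μ)) n) :=
      mul_nonneg hD0 (mul_nonneg hr0.le hG0)
    have htarget : M * (β - α) ^ μ * geomC (2 ^ (-μ)) (n + 1)
        = M * (β - α) ^ μ + M * (β - α) ^ μ * (2 ^ (-μ) * geomC (2 ^ (-μ)) n) := by
      rw [geomC_succ]; ring
    rw [htarget]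
    have hmid : min (dist (f α) (f ((α + β) / 2))) (dist (f ((α + β) / 2)) (f β))
        ≤ M * (β - α) ^ μ := hfm α β hα hαβ hβ
    by_cases hcA : k ≤ 2 ^ n
    · have e1 : α + (j : ℝ) * (β - α) / 2 ^ (n + 1) = α + (j : ℝ) * ((α + β) / 2 - α) / 2 ^ n := by
        field_simp; ring
      have e2 : α + (k : ℝ) * (β - α) / 2 ^ (n + 1) = α + (k : ℝ) * ((α + β) / 2 - α) / 2 ^ n := by
        field_simp; ring
      rw [e1, e2]
      have IH1 := IH α ((α + β) / 2) hα hm1 hm3 j k hjk hcA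
      have IH2 := IH α ((α + β) / 2) hα hm1 hm3 j j le_rfl (hjk.trans hcA)
      rw [hSc1] at IH1 IH2
      rcases min_le_iff.mp IH1 with h1 | h1
      · exact min_le_of_left_le (by linarith)
      · rcases min_le_iff.mp hmid with h2 | h2
        · rcases min_le_iff.mp IH2 with h3 | h3
          · exact min_le_of_left_le (by linarith)
          · refine min_le_of_left_le ?_
            have ht := dist_triangle (f α) (f ((α + β) / 2))
              (f (α + (j : ℝ) * ((α + β) / 2 - α) / 2 ^ n))
            have hc := dist_comm (f (α + (j : ℝ) * ((α + β) / 2 - α) / 2 ^ n)) (f ((α + β) / 2))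
            linarith
        · refine min_le_of_right_le ?_
          have ht := dist_triangle (f (α + (k : ℝ) * ((α + β) / 2 - α) / 2 ^ n))
            (f ((α + β) / 2)) (f β)
          linarith
    · push_neg at hcA
      have hk2 : k - 2 ^ n ≤ 2 ^ n := by
        have h2 : k ≤ 2 ^ n + 2 ^ n := by
          calc k ≤ 2 ^ (n + 1) := hk
          _ = 2 ^ n + 2 ^ n := by rw [pow_succ]; ring
        exact Nat.sub_le_iff_le_add.mpr h2
      by_cases hcB : 2 ^ n ≤ j
      · have e1 : α + (j : ℝ) * (β - α) / 2 ^ (n + 1)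
            = (α + β) / 2 + ((j - 2 ^ n : ℕ) : ℝ) * (β - (α + β) / 2) / 2 ^ n := by
          rw [Nat.cast_sub hcB]; push_cast; field_simp; ring
        have e2 : α + (k : ℝ) * (β - α) / 2 ^ (n + 1)
            = (α + β) / 2 + ((k - 2 ^ n : ℕ) : ℝ) * (β - (α + β) / 2) / 2 ^ n := by
          rw [Nat.cast_sub hcA.le]; push_cast; field_simp; ring
        rw [e1, e2]
        have IH1 := IH ((α + β) / 2) β hm0 hm2 hβ (j - 2 ^ n) (k - 2 ^ n)
          (Nat.sub_le_sub_right hjk _) hk2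
        have IH2 := IH ((α + β) / 2) β hm0 hm2 hβ (k - 2 ^ n) (k - 2 ^ n) le_rfl hk2
        rw [hSc2] at IH1 IH2
        rcases min_le_iff.mp IH1 with h1 | h1
        · rcases min_le_iff.mp hmid with h2 | h2
          · refine min_le_of_left_le ?_
            have ht := dist_triangle (f α) (f ((α + β) / 2))
              (f ((α + β) / 2 + ((j - 2 ^ n : ℕ) : ℝ) * (β - (α + β) / 2) / 2 ^ n))
            linarith
          · rcases min_le_iff.mp IH2 with h3 | h3
            · refine min_le_of_right_le ?_
              have ht := dist_triangle
                (f ((α + β) / 2 + ((k - 2 ^ n : ℕ) : ℝ) * (β - (α + β) / 2) / 2 ^ n))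
                (f ((α + β) / 2)) (f β)
              have hc := dist_comm (f ((α + β) / 2))
                (f ((α + β) / 2 + ((k - 2 ^ n : ℕ) : ℝ) * (β - (α + β) / 2) / 2 ^ n))
              linarith
            · exact min_le_of_right_le (by linarith)
        · exact min_le_of_right_le (by linarith)
      · push_neg at hcB
        have e1 : α + (j : ℝ) * (β - α) / 2 ^ (n + 1)
            = α + (j : ℝ) * ((α + β) / 2 - α) / 2 ^ n := by field_simp; ring
        have e2 : α + (k : ℝ) * (β - α) / 2 ^ (n + 1)
            = (α + β) / 2 + ((k - 2 ^ n : ℕ) : ℝ) * (β - (α + β) / 2) / 2 ^ n := by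
          rw [Nat.cast_sub hcA.le]; push_cast; field_simp; ring
        rw [e1, e2]
        have IH2 := IH α ((α + β) / 2) hα hm1 hm3 j j le_rfl hcB.le
        have IH3 := IH ((α + β) / 2) β hm0 hm2 hβ (k - 2 ^ n) (k - 2 ^ n) le_rfl hk2
        rw [hSc1] at IH2
        rw [hSc2] at IH3
        rcases min_le_iff.mp IH2 with h1 | h1
        · exact min_le_of_left_le (by linarith)
        · rcases min_le_iff.mp IH3 with h2 | h2
          · rcases min_le_iff.mp hmid with h3 | h3
            · refine min_le_of_left_le ?_
              have ht := dist_triangle (f α) (f ((α + β) / 2))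
                (f (α + (j : ℝ) * ((α + β) / 2 - α) / 2 ^ n))
              have hc := dist_comm (f (α + (j : ℝ) * ((α + β) / 2 - α) / 2 ^ n)) (f ((α + β) / 2))
              linarith
            · refine min_le_of_right_le ?_
              have ht := dist_triangle
                (f ((α + β) / 2 + ((k - 2 ^ n : ℕ) : ℝ) * (β - (α + β) / 2) / 2 ^ n))
                (f ((α + β) / 2)) (f β)
              have hc := dist_comm (f ((α + β) / 2))
                (f ((α + β) / 2 + ((k - 2 ^ n : ℕ) : ℝ) * (β - (α + β) / 2) / 2 ^ n))
              linarith
          · exact min_le_of_right_le (by linarith)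

/-- The key two-point estimate. -/
private lemma core_claim {μ M : ℝ} {f : ℝ → E} (hμ0 : 0 < μ) (hM0 : 0 ≤ M)
    (hrc : ∀ t ∈ Set.Ico (0:ℝ) 1, ContinuousWithinAt f (Set.Ici t) t)
    (hfm : ∀ s u : ℝ, 0 ≤ s → s < u → u ≤ 1 →
      min (dist (f s) (f ((s + u) / 2))) (dist (f ((s + u) / 2)) (f u)) ≤ M * (u - s) ^ μ)
    (σ τ a b : ℝ) (hσ : 0 ≤ σ) (hστ : σ < τ) (hτ : τ ≤ 1)
    (hσa : σ ≤ a) (hab : a ≤ b) (hbτ : b ≤ τ) :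
    min (dist (f σ) (f a)) (dist (f b) (f τ)) ≤ M * (τ - σ) ^ μ / (1 - 2 ^ (-μ)) := by
  have hr0 : (0:ℝ) < 2 ^ (-μ) := Real.rpow_pos_of_pos (by norm_num) _
  have hr1 : (2:ℝ) ^ (-μ) < 1 :=
    Real.rpow_lt_one_of_one_lt_of_neg (by norm_num) (by linarith)
  have h1r : (0:ℝ) < 1 - 2 ^ (-μ) := by linarith
  have hτσ : (0:ℝ) < τ - σ := by linarith
  have hT0 : 0 ≤ M * (τ - σ) ^ μ / (1 - 2 ^ (-μ)) :=
    div_nonneg (mul_nonneg hM0 (Real.rpow_nonneg hτσ.le μ)) h1r.le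
  by_contra hcon
  push_neg at hcon
  obtain ⟨ε, hε0, hεa, hεb⟩ : ∃ ε : ℝ, 0 < ε ∧
      M * (τ - σ) ^ μ / (1 - 2 ^ (-μ)) + ε ≤ dist (f σ) (f a) ∧
      M * (τ - σ) ^ μ / (1 - 2 ^ (-μ)) + ε ≤ dist (f b) (f τ) := by
    refine ⟨min (dist (f σ) (f a)) (dist (f b) (f τ)) - M * (τ - σ) ^ μ / (1 - 2 ^ (-μ)),
      by linarith, ?_, ?_⟩
    · linarith [min_le_left (dist (f σ) (f a)) (dist (f b) (f τ))]
    · linarith [min_le_right (dist (f σ) (f a)) (dist (f b) (f τ))]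
  have hbτ' : b < τ := by
    rcases eq_or_lt_of_le hbτ with h | h
    · rw [h, dist_self] at hεb; linarith
    · exact h
  have ha0 : 0 ≤ a := hσ.trans hσa
  have ha1 : a < 1 := lt_of_le_of_lt hab (lt_of_lt_of_le hbτ' hτ)
  have hb0 : 0 ≤ b := ha0.trans hab
  have hb1 : b < 1 := lt_of_lt_of_le hbτ' hτ
  obtain ⟨δa, hδa0, hδa⟩ :=
    Metric.continuousWithinAt_iff.mp (hrc a ⟨ha0, ha1⟩) (ε / 2) (by linarith)
  obtain ⟨δb, hδb0, hδb⟩ :=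
    Metric.continuousWithinAt_iff.mp (hrc b ⟨hb0, hb1⟩) (ε / 2) (by linarith)
  obtain ⟨n, hn⟩ := exists_pow_lt_of_lt_one
    (show (0:ℝ) < min δa δb / (τ - σ) from div_pos (lt_min hδa0 hδb0) hτσ)
    (show (1:ℝ) / 2 < 1 by norm_num)
  have h2n : (0:ℝ) < 2 ^ n := by positivity
  have hn' : (τ - σ) / 2 ^ n < min δa δb := by
    rw [lt_div_iff₀ hτσ] at hn
    have he : ((1:ℝ) / 2) ^ n * (τ - σ) = (τ - σ) / 2 ^ n := by
      rw [div_pow, one_pow]; ring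
    rw [he] at hn
    exact hn
  have hpt : ∀ c : ℝ, σ ≤ c → c ≤ τ →
      c ≤ σ + (⌈(c - σ) * 2 ^ n / (τ - σ)⌉₊ : ℝ) * (τ - σ) / 2 ^ n ∧
      σ + (⌈(c - σ) * 2 ^ n / (τ - σ)⌉₊ : ℝ) * (τ - σ) / 2 ^ n < c + (τ - σ) / 2 ^ n ∧
      ⌈(c - σ) * 2 ^ n / (τ - σ)⌉₊ ≤ 2 ^ n := by
    intro c hc1 hc2
    have hx0 : 0 ≤ (c - σ) * 2 ^ n / (τ - σ) :=
      div_nonneg (mul_nonneg (by linarith) h2n.le) hτσ.le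
    refine ⟨?_, ?_, ?_⟩
    · have h1 : (c - σ) * 2 ^ n / (τ - σ) ≤ (⌈(c - σ) * 2 ^ n / (τ - σ)⌉₊ : ℝ) := Nat.le_ceil _
      rw [div_le_iff₀ hτσ] at h1
      have h2 : c - σ ≤ (⌈(c - σ) * 2 ^ n / (τ - σ)⌉₊ : ℝ) * (τ - σ) / 2 ^ n := by
        rw [le_div_iff₀ h2n]; linarith
      linarith
    · have h1 : (⌈(c - σ) * 2 ^ n / (τ - σ)⌉₊ : ℝ) < (c - σ) * 2 ^ n / (τ - σ) + 1 :=
        Nat.ceil_lt_add_one hx0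
      have h2 : (⌈(c - σ) * 2 ^ n / (τ - σ)⌉₊ : ℝ) * (τ - σ) / 2 ^ n
          < ((c - σ) * 2 ^ n / (τ - σ) + 1) * (τ - σ) / 2 ^ n :=
        (div_lt_div_iff_of_pos_right h2n).mpr (mul_lt_mul_of_pos_right h1 hτσ)
      have h3 : ((c - σ) * 2 ^ n / (τ - σ) + 1) * (τ - σ) / 2 ^ n
          = (c - σ) + (τ - σ) / 2 ^ n := by
        field_simp
      linarith
    · rw [Nat.ceil_le]
      push_cast
      rw [div_le_iff₀ hτσ]
      nlinarith [mul_le_mul_of_nonneg_right (show c - σ ≤ τ - σ by linarith) h2n.le]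
  obtain ⟨hpa1, hpa2, _⟩ := hpt a hσa (hab.trans hbτ)
  obtain ⟨hpb1, hpb2, hpb3⟩ := hpt b (hσa.trans hab) hbτ
  have hjk : ⌈(a - σ) * 2 ^ n / (τ - σ)⌉₊ ≤ ⌈(b - σ) * 2 ^ n / (τ - σ)⌉₊ :=
    Nat.ceil_mono ((div_le_div_iff_of_pos_right hτσ).mpr
      (mul_le_mul_of_nonneg_right (by linarith) h2n.le))
  have hdya := dyadic_bound hM0 hfm n σ τ hσ hστ hτ _ _ hjk hpb3
  have hgle : M * (τ - σ) ^ μ * geomC (2 ^ (-μ)) n ≤ M * (τ - σ) ^ μ / (1 - 2 ^ (-μ)) := by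
    have h5 := mul_le_mul_of_nonneg_left (geomC_le hr0.le hr1 n)
      (mul_nonneg hM0 (Real.rpow_nonneg hτσ.le μ))
    rw [mul_one_div] at h5
    exact h5
  have hfa : dist (f (σ + (⌈(a - σ) * 2 ^ n / (τ - σ)⌉₊ : ℝ) * (τ - σ) / 2 ^ n)) (f a)
      < ε / 2 := by
    apply hδa (Set.mem_Ici.mpr hpa1)
    rw [Real.dist_eq, abs_of_nonneg (by linarith)]
    linarith [lt_of_lt_of_le hn' (min_le_left δa δb)]
  have hfb : dist (f (σ + (⌈(b - σ) * 2 ^ n / (τ - σ)⌉₊ : ℝ) * (τ - σ) / 2 ^ n)) (f b)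
      < ε / 2 := by
    apply hδb (Set.mem_Ici.mpr hpb1)
    rw [Real.dist_eq, abs_of_nonneg (by linarith)]
    linarith [lt_of_lt_of_le hn' (min_le_right δa δb)]
  have htri1 := dist_triangle (f σ)
    (f (σ + (⌈(a - σ) * 2 ^ n / (τ - σ)⌉₊ : ℝ) * (τ - σ) / 2 ^ n)) (f a)
  have htri2 := dist_triangle (f b)
    (f (σ + (⌈(b - σ) * 2 ^ n / (τ - σ)⌉₊ : ℝ) * (τ - σ) / 2 ^ n)) (f τ)
  have hcm := dist_comm (f b)
    (f (σ + (⌈(b - σ) * 2 ^ n / (τ - σ)⌉₊ : ℝ) * (τ - σ) / 2 ^ n))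
  have hfin := le_trans hdya hgle
  rcases min_le_iff.mp hfin with h | h
  · linarith
  · linarith

/-- The Fernique modulus bound. -/
private lemma fernMod_bound {μ M : ℝ} {f : ℝ → E} (hμ0 : 0 < μ) (hM0 : 0 ≤ M)
    (hrc : ∀ t ∈ Set.Ico (0:ℝ) 1, ContinuousWithinAt f (Set.Ici t) t)
    (hfm : ∀ s u : ℝ, 0 ≤ s → s < u → u ≤ 1 →
      min (dist (f s) (f ((s + u) / 2))) (dist (f ((s + u) / 2)) (f u)) ≤ M * (u - s) ^ μ)
    (σ τ : ℝ) (hσ : 0 ≤ σ) (hστ : σ < τ) (hτ : τ ≤ 1) :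
    fernMod f σ τ ≤ M * (τ - σ) ^ μ / (1 - 2 ^ (-μ)) := by
  have hr0 : (0:ℝ) < 2 ^ (-μ) := Real.rpow_pos_of_pos (by norm_num) _
  have hr1 : (2:ℝ) ^ (-μ) < 1 :=
    Real.rpow_lt_one_of_one_lt_of_neg (by norm_num) (by linarith)
  have h1r : (0:ℝ) < 1 - 2 ^ (-μ) := by linarith
  have hτσ : (0:ℝ) < τ - σ := by linarith
  have hT0 : 0 ≤ M * (τ - σ) ^ μ / (1 - 2 ^ (-μ)) :=
    div_nonneg (mul_nonneg hM0 (Real.rpow_nonneg hτσ.le μ)) h1r.le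
  have hFbb : BddBelow {x : ℝ | ∃ θ : ℝ, σ < θ ∧ θ ≤ τ ∧ x = sSup (innerSet f σ τ θ)} := by
    refine ⟨0, ?_⟩
    rintro x ⟨θ, hθ1, hθ2, rfl⟩
    apply Real.sSup_nonneg
    rintro y ⟨s, u, _, _, _, _, rfl⟩
    exact le_max_of_le_left dist_nonneg
  rw [fernMod_eq]
  apply le_of_forall_pos_le_add
  intro ε hε
  have main : ∃ θ : ℝ, σ < θ ∧ θ ≤ τ ∧ ∀ s u : ℝ, σ ≤ s → s < θ → θ ≤ u → u ≤ τ →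
      max (dist (f σ) (f s)) (dist (f u) (f τ))
        ≤ M * (τ - σ) ^ μ / (1 - 2 ^ (-μ)) + ε := by
    set A := {t : ℝ | t ∈ Set.Icc σ τ ∧
      M * (τ - σ) ^ μ / (1 - 2 ^ (-μ)) + ε < dist (f σ) (f t)} with hA
    have hAbb : BddBelow A := ⟨σ, fun t ht => ht.1.1⟩
    rcases Set.eq_empty_or_nonempty A with hAe | hAne
    · refine ⟨τ, hστ, le_rfl, ?_⟩
      intro s u hs1 hs2 hu1 hu2
      have hu : u = τ := le_antisymm hu2 hu1
      apply max_le
      · by_contra hgt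
        push_neg at hgt
        have hsA : s ∈ A := ⟨⟨hs1, hs2.le⟩, hgt⟩
        rw [hAe] at hsA
        exact absurd hsA (Set.notMem_empty s)
      · rw [hu, dist_self]; linarith
    · have hθlb : ∀ t ∈ A, sInf A ≤ t := fun t ht => csInf_le hAbb ht
      have hθτ : sInf A ≤ τ := by
        obtain ⟨t0, ht0⟩ := hAne
        exact (hθlb t0 ht0).trans ht0.1.2
      have hσ1 : σ < 1 := lt_of_lt_of_le hστ hτ
      obtain ⟨δσ, hδσ0, hδσ⟩ := Metric.continuousWithinAt_iff.mp (hrc σ ⟨hσ, hσ1⟩)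
        (M * (τ - σ) ^ μ / (1 - 2 ^ (-μ)) + ε) (by linarith)
      have hσθ : σ < sInf A := by
        have hlow : σ + δσ ≤ sInf A := by
          apply le_csInf hAne
          intro t ht
          by_contra hlt
          push_neg at hlt
          have hd : dist t σ < δσ := by
            rw [Real.dist_eq, abs_of_nonneg (by linarith [ht.1.1] : (0:ℝ) ≤ t - σ)]
            linarith [ht.1.1]
          have h6 := hδσ (Set.mem_Ici.mpr ht.1.1) hd
          rw [dist_comm] at h6
          linarith [ht.2]
        linarith
      refine ⟨sInf A, hσθ, hθτ, ?_⟩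
      intro s u hs1 hs2 hu1 hu2
      apply max_le
      · by_contra hgt
        push_neg at hgt
        have hsA : s ∈ A := ⟨⟨hs1, hs2.le.trans hθτ⟩, hgt⟩
        exact absurd (hθlb s hsA) (not_le.mpr hs2)
      · by_contra hgt
        push_neg at hgt
        have huτ : u < τ := by
          rcases eq_or_lt_of_le hu2 with h | h
          · rw [h, dist_self] at hgt; linarith
          · exact h
        rcases eq_or_lt_of_le hu1 with hequ | hltu
        · have hσu : σ < u := hequ ▸ hσθ
          have hu0 : (0:ℝ) ≤ u := le_of_lt (lt_of_le_of_lt hσ hσu)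
          obtain ⟨δθ, hδθ0, hδθ⟩ := Metric.continuousWithinAt_iff.mp
            (hrc u ⟨hu0, lt_of_lt_of_le huτ hτ⟩) ε hε
          obtain ⟨t, htA, htlt⟩ := (csInf_lt_iff hAbb hAne).mp
            (show sInf A < u + δθ from by rw [← hequ]; linarith [hσθ, hδθ0])
          have hut : u ≤ t := hequ ▸ hθlb t htA
          have hdt : dist t u < δθ := by
            rw [Real.dist_eq, abs_of_nonneg (by linarith)]
            linarith
          have hft : dist (f t) (f u) < ε := hδθ (Set.mem_Ici.mpr hut) hdt
          have htri := dist_triangle (f σ) (f u) (f t)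
          have hcm := dist_comm (f u) (f t)
          have hgu : M * (τ - σ) ^ μ / (1 - 2 ^ (-μ)) < dist (f σ) (f u) := by
            linarith [htA.2]
          have hcore := core_claim hμ0 hM0 hrc hfm σ τ u u hσ hστ hτ hσu.le le_rfl hu2
          rcases min_le_iff.mp hcore with h | h
          · linarith
          · linarith
        · obtain ⟨t, htA, htlt⟩ := (csInf_lt_iff hAbb hAne).mp hltu
          have hcore := core_claim hμ0 hM0 hrc hfm σ τ t u hσ hστ hτ htA.1.1 htlt.le hu2
          rcases min_le_iff.mp hcore with h | h
          · linarith [htA.2]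
          · linarith
  obtain ⟨θ, hθ1, hθ2, hbnd⟩ := main
  have hsb : sSup (innerSet f σ τ θ) ≤ M * (τ - σ) ^ μ / (1 - 2 ^ (-μ)) + ε := by
    apply Real.sSup_le
    · rintro y ⟨s, u, h1, h2, h3, h4, rfl⟩
      exact hbnd s u h1 h2 h3 h4
    · linarith
  exact le_trans (csInf_le hFbb ⟨θ, hθ1, hθ2, rfl⟩) hsb

end Stmt4Aux

theorem stmt4 {E : Type*} [MetricSpace E] (μ : ℝ) (hμ : μ ∈ Set.Ioo (0:ℝ) 1)
    (f : ℝ → E) (hf : MemDHolder μ f) :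
    midSemi μ f ≤ holderSemi μ f ∧ holderSemi μ f ≤ 2 * tildeSemi μ f ∧
      2 * tildeSemi μ f ≤ (2 / (1 - 2 ^ (-μ))) * midSemi μ f := by
  obtain ⟨hμ0, hμ1⟩ := hμ
  obtain ⟨hcad, hbH, hbL, hbR⟩ := hf
  have hrc := hcad.1
  have hr0 : (0:ℝ) < 2 ^ (-μ) := Real.rpow_pos_of_pos (by norm_num) _
  have hr1 : (2:ℝ) ^ (-μ) < 1 :=
    Real.rpow_lt_one_of_one_lt_of_neg (by norm_num) (by linarith)
  have h1r : (0:ℝ) < 1 - 2 ^ (-μ) := by linarith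
  -- the midpoint set sits inside the full Hölder set
  have hsub : midSet μ f ⊆ holderSet μ f := by
    rintro x ⟨s, u, hs, hsu, hu, rfl⟩
    exact ⟨s, (s + u) / 2, u, hs.le, by linarith, by linarith, hu, rfl⟩
  have hmidB : BddAbove (midSet μ f) := BddAbove.mono hsub hbH
  have hmidne : (midSet μ f).Nonempty :=
    ⟨_, ⟨1/2, 1, by norm_num, by norm_num, le_rfl, rfl⟩⟩
  have ineq1 : midSemi μ f ≤ holderSemi μ f := by
    rw [midSemi_eq]
    exact csSup_le_csSup hbH hmidne hsub
  have hM0 : 0 ≤ midSemi μ f := by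
    have hx0 : tripleDelta f (1/2) ((1/2 + 1) / 2) 1 / ((1:ℝ) - 1/2) ^ μ ∈ midSet μ f :=
      ⟨1/2, 1, by norm_num, by norm_num, le_rfl, rfl⟩
    have h1 := le_csSup hmidB hx0
    have h2 : (0:ℝ) ≤ tripleDelta f (1/2) ((1/2 + 1) / 2) 1 / ((1:ℝ) - 1/2) ^ μ :=
      div_nonneg (le_min dist_nonneg dist_nonneg) (Real.rpow_nonneg (by norm_num) μ)
    rw [midSemi_eq]
    linarith
  -- the midpoint triple bound for positive left endpoint
  have hpos : ∀ s u : ℝ, 0 < s → s < u → u ≤ 1 →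
      min (dist (f s) (f ((s + u) / 2))) (dist (f ((s + u) / 2)) (f u))
        ≤ midSemi μ f * (u - s) ^ μ := by
    intro s u hs hsu hu
    have hmem : tripleDelta f s ((s + u) / 2) u / (u - s) ^ μ ∈ midSet μ f :=
      ⟨s, u, hs, hsu, hu, rfl⟩
    have h1 := le_csSup hmidB hmem
    have hd : (0:ℝ) < (u - s) ^ μ := Real.rpow_pos_of_pos (by linarith) μ
    rw [div_le_iff₀ hd] at h1
    rw [midSemi_eq]
    exact h1
  -- extend to left endpoint 0 using right-continuity
  have hfm : ∀ s u : ℝ, 0 ≤ s → s < u → u ≤ 1 →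
      min (dist (f s) (f ((s + u) / 2))) (dist (f ((s + u) / 2)) (f u))
        ≤ midSemi μ f * (u - s) ^ μ := by
    intro s u hs hsu hu
    rcases eq_or_lt_of_le hs with h0 | h0
    · subst h0
      have hu0 : (0:ℝ) < u := hsu
      have l1 : Filter.Tendsto f (nhdsWithin 0 (Set.Ioi 0)) (nhds (f 0)) :=
        Filter.Tendsto.mono_left (hrc 0 ⟨le_rfl, by norm_num⟩)
          (nhdsWithin_mono 0 Set.Ioi_subset_Ici_self)
      have linner : Filter.Tendsto (fun s : ℝ => (s + u) / 2) (nhdsWithin 0 (Set.Ioi 0))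
          (nhdsWithin (u / 2) (Set.Ici (u / 2))) := by
        apply tendsto_nhdsWithin_of_tendsto_nhds_of_eventually_within
        · have hco : Filter.Tendsto (fun s : ℝ => (s + u) / 2) (nhds 0) (nhds ((0 + u) / 2)) :=
            Continuous.tendsto (by continuity) 0
          rw [zero_add] at hco
          exact hco.mono_left nhdsWithin_le_nhds
        · filter_upwards [self_mem_nhdsWithin] with s hs
          have hs' : (0:ℝ) < s := hs
          exact Set.mem_Ici.mpr (by linarith)
      have l2 : Filter.Tendsto (fun s : ℝ => f ((s + u) / 2)) (nhdsWithin 0 (Set.Ioi 0))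
          (nhds (f (u / 2))) :=
        Filter.Tendsto.comp (hrc (u / 2) ⟨by linarith, by linarith⟩) linner
      have l3 : Filter.Tendsto (fun s : ℝ => min (dist (f s) (f ((s + u) / 2)))
            (dist (f ((s + u) / 2)) (f u))) (nhdsWithin 0 (Set.Ioi 0))
          (nhds (min (dist (f 0) (f (u / 2))) (dist (f (u / 2)) (f u)))) :=
        Filter.Tendsto.min (Filter.Tendsto.dist l1 l2) (Filter.Tendsto.dist l2 tendsto_const_nhds)
      have l4 : Filter.Tendsto (fun s : ℝ => midSemi μ f * (u - s) ^ μ)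
          (nhdsWithin 0 (Set.Ioi 0)) (nhds (midSemi μ f * (u - 0) ^ μ)) := by
        apply Filter.Tendsto.const_mul
        have h1 : Filter.Tendsto (fun s : ℝ => u - s) (nhdsWithin 0 (Set.Ioi 0))
            (nhds (u - 0)) :=
          Filter.Tendsto.mono_left (tendsto_const_nhds.sub tendsto_id) nhdsWithin_le_nhds
        have h2 : ContinuousAt (fun x : ℝ => x ^ μ) (u - 0) :=
          Real.continuousAt_rpow_const _ _ (Or.inl (by rw [sub_zero]; exact hu0.ne'))
        exact Filter.Tendsto.comp h2.tendsto h1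
      have hev : ∀ᶠ s in nhdsWithin 0 (Set.Ioi 0), min (dist (f s) (f ((s + u) / 2)))
          (dist (f ((s + u) / 2)) (f u)) ≤ midSemi μ f * (u - s) ^ μ := by
        filter_upwards [Ioo_mem_nhdsGT_of_mem (Set.left_mem_Ico.mpr hu0)] with s hs
        exact hpos s u hs.1 hs.2 hu
      have hlim := le_of_tendsto_of_tendsto l3 l4 hev
      simpa using hlim
    · exact hpos s u h0 hsu hu
  -- the Fernique modulus bounds
  have hfernM : ∀ σ τ : ℝ, 0 ≤ σ → σ < τ → τ ≤ 1 →
      fernMod f σ τ ≤ midSemi μ f * (τ - σ) ^ μ / (1 - 2 ^ (-μ)) :=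
    fun σ τ h1 h2 h3 => fernMod_bound hμ0 hM0 hrc hfm σ τ h1 h2 h3
  have hfernEta : ∀ η : ℝ, 0 < η → fernEta f η ≤ midSemi μ f * η ^ μ / (1 - 2 ^ (-μ)) := by
    intro η hη
    have h0 : 0 ≤ midSemi μ f * η ^ μ / (1 - 2 ^ (-μ)) :=
      div_nonneg (mul_nonneg hM0 (Real.rpow_nonneg hη.le μ)) h1r.le
    rw [fernEta_eq]
    apply Real.sSup_le _ h0
    rintro x ⟨σ, τ, h1, h2, h3, h4, rfl⟩
    have h5 := hfernM σ τ h1 h2 h3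
    have h6 : midSemi μ f * (τ - σ) ^ μ ≤ midSemi μ f * η ^ μ :=
      mul_le_mul_of_nonneg_left (Real.rpow_le_rpow (by linarith) h4 hμ0.le) hM0
    have h7 := (div_le_div_iff_of_pos_right h1r).mpr h6
    linarith
  have htildeB : ∀ x ∈ tildeSet μ f, x ≤ midSemi μ f / (1 - 2 ^ (-μ)) := by
    rintro x ⟨η, hη, rfl⟩
    have hηp : (0:ℝ) < η ^ μ := Real.rpow_pos_of_pos hη μ
    have h5 := hfernEta η hη
    have h6 := (div_le_div_iff_of_pos_right hηp).mpr h5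
    have h7 : midSemi μ f * η ^ μ / (1 - 2 ^ (-μ)) / η ^ μ = midSemi μ f / (1 - 2 ^ (-μ)) := by
      field_simp
    rw [h7] at h6
    exact h6
  have htildeBdd : BddAbove (tildeSet μ f) := ⟨_, htildeB⟩
  have htildeLe : tildeSemi μ f ≤ midSemi μ f / (1 - 2 ^ (-μ)) := by
    rw [tildeSemi_eq]
    exact Real.sSup_le htildeB (div_nonneg hM0 h1r.le)
  have ineq3 : 2 * tildeSemi μ f ≤ (2 / (1 - 2 ^ (-μ))) * midSemi μ f := by
    have h8 : (2 / (1 - 2 ^ (-μ))) * midSemi μ f = 2 * (midSemi μ f / (1 - 2 ^ (-μ))) := by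
      ring
    linarith
  -- global boundedness from the left seminorm
  obtain ⟨CL, hCL⟩ := hbL
  have hCL0 : 0 ≤ CL := by
    have hmem : dist (f 0) (f 1) / (1:ℝ) ^ μ ∈ leftSet μ f := ⟨1, one_pos, le_rfl, rfl⟩
    have h1 := hCL hmem
    have h2 : (0:ℝ) ≤ dist (f 0) (f 1) / (1:ℝ) ^ μ :=
      div_nonneg dist_nonneg (Real.rpow_nonneg zero_le_one μ)
    linarith
  have hdist0 : ∀ t : ℝ, 0 ≤ t → t ≤ 1 → dist (f 0) (f t) ≤ CL := by
    intro t h0 h1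
    rcases eq_or_lt_of_le h0 with h | h
    · rw [← h, dist_self]; exact hCL0
    · have hmem : dist (f 0) (f t) / t ^ μ ∈ leftSet μ f := ⟨t, h, h1, rfl⟩
      have hub := hCL hmem
      have htp : (0:ℝ) < t ^ μ := Real.rpow_pos_of_pos h μ
      rw [div_le_iff₀ htp] at hub
      have ht1 : t ^ μ ≤ 1 := Real.rpow_le_one h0 h1 hμ0.le
      nlinarith
  have hglob : ∀ p q : ℝ, 0 ≤ p → p ≤ 1 → 0 ≤ q → q ≤ 1 → dist (f p) (f q) ≤ 2 * CL := by
    intro p q hp0 hp1 hq0 hq1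
    have h1 := dist_triangle (f p) (f 0) (f q)
    have h2 := dist_comm (f p) (f 0)
    linarith [hdist0 p hp0 hp1, hdist0 q hq0 hq1]
  -- nonnegativity of the tilde seminorm
  have hfern0 : ∀ η' : ℝ, 0 ≤ fernEta f η' := by
    intro η'
    rw [fernEta_eq]
    apply Real.sSup_nonneg
    rintro x ⟨σ, τ, h1, h2, h3, h4, rfl⟩
    rw [fernMod_eq]
    apply Real.sInf_nonneg
    rintro x ⟨θ, hθ1, hθ2, rfl⟩
    apply Real.sSup_nonneg
    rintro y ⟨s, u, _, _, _, _, rfl⟩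
    exact le_max_of_le_left dist_nonneg
  have htilde0 : 0 ≤ tildeSemi μ f := by
    have hmem : fernEta f 1 / (1:ℝ) ^ μ ∈ tildeSet μ f := ⟨1, one_pos, rfl⟩
    have h1 := le_csSup htildeBdd hmem
    have h2 : (0:ℝ) ≤ fernEta f 1 / (1:ℝ) ^ μ :=
      div_nonneg (hfern0 1) (Real.rpow_nonneg zero_le_one μ)
    rw [tildeSemi_eq]
    linarith
  -- the middle inequality
  have ineq2 : holderSemi μ f ≤ 2 * tildeSemi μ f := by
    rw [show holderSemi μ f = sSup (holderSet μ f) from rfl]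
    apply Real.sSup_le _ (by linarith)
    rintro x ⟨s, t, u, hs, hst, htu, hu, rfl⟩
    rcases eq_or_lt_of_le (hst.trans htu) with hsu | hsu
    · -- degenerate case s = u
      have hts : t = s := le_antisymm (hsu ▸ htu) hst
      have hΔ0 : tripleDelta f s t u = 0 := by
        rw [show tripleDelta f s t u = min (dist (f s) (f t)) (dist (f t) (f u)) from rfl,
          hts, dist_self]
        exact min_eq_left dist_nonneg
      rw [hΔ0, zero_div]
      linarith
    · have hΔle : tripleDelta f s t u ≤ fernMod f s u := by
        rw [fernMod_eq]
        apply le_csInf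
        · exact ⟨_, u, hsu, le_rfl, rfl⟩
        rintro x ⟨θ, hθ1, hθ2, rfl⟩
        have hbddI : BddAbove (innerSet f s u θ) := by
          refine ⟨2 * CL, ?_⟩
          rintro y ⟨s', u', h1, h2, h3, h4, rfl⟩
          refine max_le (hglob s s' hs (by linarith) (hs.trans h1) (by linarith)) ?_
          exact hglob u' u (by linarith) (by linarith) (by linarith) hu
        by_cases hcase : t < θ
        · have h1 : max (dist (f s) (f t)) (dist (f u) (f u)) ≤ sSup (innerSet f s u θ) :=
            le_csSup hbddI ⟨t, u, hst, hcase, hθ2, le_rfl, rfl⟩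
          have h2 : tripleDelta f s t u ≤ max (dist (f s) (f t)) (dist (f u) (f u)) :=
            le_trans (min_le_left _ _) (le_max_left _ _)
          linarith
        · push_neg at hcase
          have h1 : max (dist (f s) (f s)) (dist (f t) (f u)) ≤ sSup (innerSet f s u θ) :=
            le_csSup hbddI ⟨s, t, le_rfl, hθ1, hcase, htu, rfl⟩
          have h2 : tripleDelta f s t u ≤ max (dist (f s) (f s)) (dist (f t) (f u)) :=
            le_trans (min_le_right _ _) (le_max_right _ _)
          linarith
      have hmemF : fernMod f s u ∈ fernSet f (u - s) := ⟨s, u, hs, hsu, hu, le_rfl, rfl⟩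
      have hbddF : BddAbove (fernSet f (u - s)) := by
        refine ⟨midSemi μ f * (u - s) ^ μ / (1 - 2 ^ (-μ)), ?_⟩
        rintro x ⟨σ, τ, h1, h2, h3, h4, rfl⟩
        have h5 := hfernM σ τ h1 h2 h3
        have h6 : midSemi μ f * (τ - σ) ^ μ ≤ midSemi μ f * (u - s) ^ μ :=
          mul_le_mul_of_nonneg_left (Real.rpow_le_rpow (by linarith) h4 hμ0.le) hM0
        have h7 := (div_le_div_iff_of_pos_right h1r).mpr h6
        linarith
      have hFle : fernMod f s u ≤ fernEta f (u - s) := by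
        rw [fernEta_eq]
        exact le_csSup hbddF hmemF
      have hden : (0:ℝ) < (u - s) ^ μ := Real.rpow_pos_of_pos (by linarith) μ
      have hq1 : tripleDelta f s t u / (u - s) ^ μ ≤ fernEta f (u - s) / (u - s) ^ μ :=
        (div_le_div_iff_of_pos_right hden).mpr (hΔle.trans hFle)
      have hmemT : fernEta f (u - s) / (u - s) ^ μ ∈ tildeSet μ f := ⟨u - s, by linarith, rfl⟩
      have hq2 : fernEta f (u - s) / (u - s) ^ μ ≤ tildeSemi μ f := by
        rw [tildeSemi_eq]
        exact le_csSup htildeBdd hmemT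
      linarith
  exact ⟨ineq1, ineq2, ineq3⟩
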